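/- For any square matrices A ∈ ℝ^{n×n}, Q symmetric positive definite, Π symmetric positive definite, and integer k ≥ 0, define Π_k = A^k Π (A^k)ᵀ + Σ_{j=0}^{k-1} A^j Q (A^j)ᵀ. Then (A^k)ᵀ Π_k⁻¹ A^k ≤ Π⁻¹ in the Loewner order. -/

import Mathlib

open Matrix Finset

theorem open_loop_covariance_bound {n : ℕ}
    (A : Matrix (Fin n) (Fin n) ℝ)
    (Q Pm : Matrix (Fin n) (Fin n) ℝ) (hQ : Q.PosDef) (hPm : Pm.PosDef)
    (k : ℕ)
    (Pmk : Matrix (Fin n) (Fin n) ℝ)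
    (hPmk : Pmk = A ^ k * Pm * (A ^ k)ᵀ + ∑ j ∈ Finset.range k, A ^ j * Q * (A ^ j)ᵀ) :
    (Pm⁻¹ - (A ^ k)ᵀ * Pmk⁻¹ * A ^ k).PosSemidef := by
  have hBH : ∀ M : Matrix (Fin n) (Fin n) ℝ, Mᴴ = Mᵀ := fun M => by
    ext i j; simp [conjTranspose_apply]
  have hsum : ∀ (s : Finset ℕ) (f : ℕ → Matrix (Fin n) (Fin n) ℝ),
      (∀ j ∈ s, (f j).PosSemidef) → (∑ j ∈ s, f j).PosSemidef := by
    intro s f hf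
    refine Finset.sum_induction f (fun M : Matrix (Fin n) (Fin n) ℝ => M.PosSemidef)
      (fun a b ha hb => ha.add hb) Matrix.PosSemidef.zero hf
  have hS : (∑ j ∈ Finset.range k, A ^ j * Q * (A ^ j)ᵀ).PosSemidef := by
    refine hsum _ _ fun j _ => ?_
    rw [← hBH]
    exact hQ.posSemidef.mul_mul_conjTranspose_same _
  have hPmkPD : Pmk.PosDef := by
    rcases Nat.eq_zero_or_pos k with hk | hk
    · subst hk
      rw [hPmk]
      simpa using hPm
    · obtain ⟨m, rfl⟩ := Nat.exists_eq_succ_of_ne_zero hk.ne'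
      rw [hPmk, Finset.sum_range_succ']
      have h1 : (A ^ (m + 1) * Pm * (A ^ (m + 1))ᵀ).PosSemidef := by
        rw [← hBH]; exact hPm.posSemidef.mul_mul_conjTranspose_same _
      have h2 : (∑ i ∈ Finset.range m, A ^ (i + 1) * Q * (A ^ (i + 1))ᵀ).PosSemidef := by
        refine hsum _ _ fun j _ => ?_
        rw [← hBH]
        exact hQ.posSemidef.mul_mul_conjTranspose_same _
      have h3 : (A ^ 0 * Q * (A ^ 0)ᵀ).PosDef := by simpa using hQ
      rw [← add_assoc]
      exact Matrix.PosDef.posSemidef_add (h1.add h2) h3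
  haveI : Invertible Pm⁻¹ := Pm⁻¹.invertibleOfIsUnitDet (isUnit_iff_ne_zero.mpr hPm.inv.det_pos.ne')
  haveI : Invertible Pmk := Pmk.invertibleOfIsUnitDet (isUnit_iff_ne_zero.mpr hPmkPD.det_pos.ne')
  have hblock : (fromBlocks Pm⁻¹ (A ^ k)ᵀ ((A ^ k)ᵀ)ᴴ Pmk).PosSemidef := by
    rw [Matrix.PosDef.fromBlocks₁₁ _ _ hPm.inv]
    rw [hBH, transpose_transpose, Matrix.nonsing_inv_nonsing_inv _ (isUnit_iff_ne_zero.mpr hPm.det_pos.ne')]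
    have heq : Pmk - A ^ k * Pm * (A ^ k)ᵀ = ∑ j ∈ Finset.range k, A ^ j * Q * (A ^ j)ᵀ := by
      rw [hPmk, add_sub_cancel_left]
    rw [heq]; exact hS
  rw [Matrix.PosDef.fromBlocks₂₂ _ _ hPmkPD, hBH, transpose_transpose] at hblock
  exact hblock
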